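/- Connectivity of signed measures by optimal transport kernels is not transitive in dimension two: for the cost c(x,y) = ‖x − y‖² on ℝ², consider the signed measures a₁ = δ_{(1,0.5)} − δ_{(−1,−0.5)}, a₂ = δ_{(−1,0.5)} − δ_{(1,−0.5)}, and a₃ = δ_{(0,1)} − δ_{(0,−1)}. Then there exist optimal transport kernels K₁ and K₂ with a₁K₁ = a₃ and a₃K₂ = a₂, but there is no optimal transport kernel K with a₁K = a₂. -/

import Mathlib

open MeasureTheory ProbabilityTheory Set
open scoped ENNReal

noncomputable section

/-- The transport cost of a plan `γ` for the cost function `c`. -/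
def transportCost {X Y : Type*} [MeasurableSpace X] [MeasurableSpace Y]
    (c : X × Y → ℝ) (γ : Measure (X × Y)) : ℝ≥0∞ :=
  ∫⁻ pt, ENNReal.ofReal (c pt) ∂γ

/-- `γ` is a coupling of `μ` and `ν`: its marginals are `μ` and `ν`. -/
def IsCoupling {X Y : Type*} [MeasurableSpace X] [MeasurableSpace Y]
    (γ : Measure (X × Y)) (μ : Measure X) (ν : Measure Y) : Prop :=
  γ.map Prod.fst = μ ∧ γ.map Prod.snd = ν

/-- `γ` is an optimal coupling of `μ` and `ν` for the cost `c`. -/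
def IsOptimalCoupling {X Y : Type*} [MeasurableSpace X] [MeasurableSpace Y]
    (c : X × Y → ℝ) (γ : Measure (X × Y)) (μ : Measure X) (ν : Measure Y) : Prop :=
  IsCoupling γ μ ν ∧
    ∀ γ' : Measure (X × Y), IsCoupling γ' μ ν → transportCost c γ ≤ transportCost c γ'

/-- A Markov kernel `K` is an optimal transport kernel for the cost `c` if, for every
finite positive measure `μ`, whenever the product measure `μ ⊙ K = μ ⊗ₘ K` has finite
transport cost it is an optimal coupling between `μ` and `μK`. -/
def IsOptimalTransportKernel {X Y : Type*} [MeasurableSpace X] [MeasurableSpace Y]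
    (c : X × Y → ℝ) (K : Kernel X Y) : Prop :=
  ∀ μ : Measure X, IsFiniteMeasure μ → transportCost c (μ ⊗ₘ K) < ⊤ →
    IsOptimalCoupling c (μ ⊗ₘ K) μ (μ.bind K)

/-- The image of a finite measure under a Markov kernel is finite. -/
instance bindIsFiniteMeasure {X Y : Type*} [MeasurableSpace X] [MeasurableSpace Y]
    (μ : Measure X) [IsFiniteMeasure μ] (K : Kernel X Y) [IsMarkovKernel K] :
    IsFiniteMeasure (μ.bind K) := by
  constructor
  rw [Measure.bind_apply MeasurableSet.univ (Kernel.measurable K).aemeasurable]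
  calc ∫⁻ x, (K x) Set.univ ∂μ = ∫⁻ _, 1 ∂μ := by simp
    _ = μ Set.univ := by simp
    _ < ⊤ := measure_lt_top μ _

/-- The image `aK := a⁺K − a⁻K` of a finite signed measure `a = a⁺ − a⁻` (Jordan
decomposition) under a Markov kernel `K`. -/
def signedKernelImage {X Y : Type*} [MeasurableSpace X] [MeasurableSpace Y]
    (a : SignedMeasure X) (K : Kernel X Y) [IsMarkovKernel K] : SignedMeasure Y :=
  (a.toJordanDecomposition.posPart.bind K).toSignedMeasure
    - (a.toJordanDecomposition.negPart.bind K).toSignedMeasure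


section Aux

open MeasureTheory ProbabilityTheory Set
open scoped ENNReal

variable {α : Type*} [MeasurableSpace α]

/-- A probability measure giving zero mass to the complement of a singleton is a Dirac mass. -/
lemma prob_eq_dirac [MeasurableSingletonClass α] (ν : Measure α) [IsProbabilityMeasure ν]
    (r : α) (h : ν {r}ᶜ = 0) : ν = Measure.dirac r := by
  ext A hA
  rw [Measure.dirac_apply' r hA]
  by_cases hr : r ∈ A
  · have hAc : ν Aᶜ = 0 :=
      measure_mono_null (fun x hx (hxr : x = r) => hx (hxr ▸ hr)) h
    have h1 : ν A = 1 := by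
      have h2 := measure_add_measure_compl (μ := ν) hA
      rw [hAc, add_zero] at h2
      simpa using h2
    simp [Set.indicator_of_mem hr, h1]
  · have hA0 : ν A = 0 :=
      measure_mono_null (fun x hx (hxr : x ∈ ({r} : Set α)) => hr (hxr ▸ hx)) h
    simp [Set.indicator_of_notMem hr, hA0]

/-- Dirac masses at distinct points are mutually singular. -/
lemma dirac_mutuallySingular [MeasurableSingletonClass α] {p q : α} (hpq : p ≠ q) :
    (Measure.dirac p) ⟂ₘ (Measure.dirac q) := by
  refine ⟨{q}, measurableSet_singleton q, ?_, ?_⟩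
  · rw [Measure.dirac_apply' p (measurableSet_singleton q)]
    simp [hpq]
  · rw [Measure.dirac_apply' q (measurableSet_singleton q).compl]
    simp

/-- The Jordan decomposition of `δ_p − δ_q` for `p ≠ q`. -/
lemma toJordanDecomposition_dirac_sub [MeasurableSingletonClass α] {p q : α} (hpq : p ≠ q) :
    ((Measure.dirac p).toSignedMeasure - (Measure.dirac q).toSignedMeasure).toJordanDecomposition
      = ⟨Measure.dirac p, Measure.dirac q, dirac_mutuallySingular hpq⟩ := by
  have h : ((⟨Measure.dirac p, Measure.dirac q, dirac_mutuallySingular hpq⟩ :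
      JordanDecomposition α) : JordanDecomposition α).toSignedMeasure
      = (Measure.dirac p).toSignedMeasure - (Measure.dirac q).toSignedMeasure := rfl
  rw [← h, JordanDecomposition.toJordanDecomposition_toSignedMeasure]

/-- `toSignedMeasure` is congruent along measure equalities. -/
lemma toSM_congr {μ ν : Measure α} [IsFiniteMeasure μ] [IsFiniteMeasure ν] (h : μ = ν) :
    μ.toSignedMeasure = ν.toSignedMeasure := by subst h; rfl

/-- The image of `δ_p − δ_q` under a Markov kernel. -/
lemma signedKernelImage_dirac_sub [MeasurableSingletonClass α] {p q : α} (hpq : p ≠ q)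
    (K : Kernel α α) [IsMarkovKernel K] :
    signedKernelImage
        ((Measure.dirac p).toSignedMeasure - (Measure.dirac q).toSignedMeasure) K
      = ((K p).toSignedMeasure - (K q).toSignedMeasure) := by
  have hbp : ((Measure.dirac p).toSignedMeasure
        - (Measure.dirac q).toSignedMeasure).toJordanDecomposition.posPart.bind ⇑K = K p := by
    rw [toJordanDecomposition_dirac_sub hpq]
    exact Measure.dirac_bind (Kernel.measurable K) p
  have hbq : ((Measure.dirac p).toSignedMeasure
        - (Measure.dirac q).toSignedMeasure).toJordanDecomposition.negPart.bind ⇑K = K q := by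
    rw [toJordanDecomposition_dirac_sub hpq]
    exact Measure.dirac_bind (Kernel.measurable K) q
  rw [signedKernelImage]
  exact congrArg₂ (· - ·) (toSM_congr hbp) (toSM_congr hbq)

/-- Deterministic kernels given by maps satisfying a Fenchel-type sum-of-squares
decomposition of the quadratic cost are optimal transport kernels. -/
lemma isOptimalTransportKernel_deterministic
    (c : (ℝ × ℝ) × (ℝ × ℝ) → ℝ)
    (hc : ∀ pt : (ℝ × ℝ) × (ℝ × ℝ),
      c pt = (pt.1.1 - pt.2.1) ^ 2 + (pt.1.2 - pt.2.2) ^ 2)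
    (T : ℝ × ℝ → ℝ × ℝ) (hT : Continuous T)
    (G H : ℝ × ℝ → ℝ) (hG : Continuous G) (hH : Continuous H)
    (hle : ∀ x y : ℝ × ℝ, G x + H y ≤ c (x, y))
    (heq : ∀ x : ℝ × ℝ, c (x, T x) = G x + H (T x))
    (M : ℝ)
    (hGb : ∀ x : ℝ × ℝ, |G x| ≤ M * c (x, T x))
    (hHb : ∀ x : ℝ × ℝ, |H (T x)| ≤ M * c (x, T x)) :
    IsOptimalTransportKernel c (Kernel.deterministic T hT.measurable) := by
  have hcc : Continuous c := by
    have hcf : c = fun pt : (ℝ × ℝ) × (ℝ × ℝ) =>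
        (pt.1.1 - pt.2.1) ^ 2 + (pt.1.2 - pt.2.2) ^ 2 := funext hc
    rw [hcf]; fun_prop
  have hcm : Measurable c := hcc.measurable
  have hc0 : ∀ pt, 0 ≤ c pt := fun pt => by rw [hc]; positivity
  intro μ hμ hfin
  haveI := hμ
  set K := Kernel.deterministic T hT.measurable with hKdef
  have hKapp : ∀ x, K x = Measure.dirac (T x) := fun x =>
    Kernel.deterministic_apply hT.measurable x
  have hcost : transportCost c (μ ⊗ₘ K) = ∫⁻ x, ENNReal.ofReal (c (x, T x)) ∂μ := by
    rw [transportCost,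
      Measure.lintegral_compProd (f := fun pt => ENNReal.ofReal (c pt)) hcm.ennreal_ofReal]
    refine lintegral_congr fun x => ?_
    rw [hKapp x, lintegral_dirac]
  have hbind : μ.bind K = μ.map T := by
    have h1 : (K : (ℝ × ℝ) → Measure (ℝ × ℝ)) = fun x => Measure.dirac (T x) :=
      funext hKapp
    rw [show μ.bind ⇑K = μ.bind (fun x => Measure.dirac (T x)) by rw [h1]]
    exact Measure.bind_dirac_eq_map μ hT.measurable
  have hfst : (μ ⊗ₘ K).map Prod.fst = μ := Measure.fst_compProd μ K
  have hsnd : (μ ⊗ₘ K).map Prod.snd = μ.bind K := by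
    ext A hA
    rw [Measure.map_apply measurable_snd hA,
      Measure.compProd_apply (measurable_snd hA),
      Measure.bind_apply hA (Kernel.measurable K).aemeasurable]
    exact lintegral_congr fun x => rfl
  refine ⟨⟨hfst, hsnd⟩, ?_⟩
  intro γ' hγ'
  rcases eq_top_or_lt_top (transportCost c γ') with htop | hγfin
  · rw [htop]; exact le_top
  haveI : IsFiniteMeasure γ' := by
    constructor
    have h1 : γ' Set.univ = μ Set.univ := by
      rw [← hγ'.1, Measure.map_apply measurable_fst MeasurableSet.univ]
      simp
    rw [h1]; exact measure_lt_top μ _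
  have hf : Integrable (fun x => c (x, T x)) μ := by
    refine ⟨(hcc.comp (continuous_id.prodMk hT)).aestronglyMeasurable, ?_⟩
    rw [hasFiniteIntegral_iff_ofReal (Filter.Eventually.of_forall fun x => hc0 _)]
    rw [hcost] at hfin
    exact hfin
  have hGint : Integrable G μ := by
    refine Integrable.mono' (hf.const_mul M) hG.aestronglyMeasurable ?_
    exact Filter.Eventually.of_forall fun x => by
      rw [Real.norm_eq_abs]; exact hGb x
  have hHTint : Integrable (fun x => H (T x)) μ := by
    refine Integrable.mono' (hf.const_mul M) (hH.comp hT).aestronglyMeasurable ?_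
    exact Filter.Eventually.of_forall fun x => by
      rw [Real.norm_eq_abs]; exact hHb x
  have hcγ : Integrable c γ' := by
    refine ⟨hcc.aestronglyMeasurable, ?_⟩
    rw [hasFiniteIntegral_iff_ofReal (Filter.Eventually.of_forall fun pt => hc0 _)]
    rw [transportCost] at hγfin
    exact hγfin
  have hGfst : Integrable (fun p : (ℝ × ℝ) × (ℝ × ℝ) => G p.1) γ' := by
    have h1 : Integrable G (γ'.map Prod.fst) := by rw [hγ'.1]; exact hGint
    exact (integrable_map_measure hG.aestronglyMeasurable
      measurable_fst.aemeasurable).mp h1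
  have hHsnd : Integrable (fun p : (ℝ × ℝ) × (ℝ × ℝ) => H p.2) γ' := by
    have h2 : Integrable H (γ'.map Prod.snd) := by
      rw [hγ'.2, hbind]
      exact (integrable_map_measure hH.aestronglyMeasurable
        hT.measurable.aemeasurable).mpr hHTint
    exact (integrable_map_measure hH.aestronglyMeasurable
      measurable_snd.aemeasurable).mp h2
  have key : ∫ x, c (x, T x) ∂μ ≤ ∫ p, c p ∂γ' := by
    have h1 : ∫ p, (G p.1 + H p.2) ∂γ' ≤ ∫ p, c p ∂γ' :=
      integral_mono (hGfst.add hHsnd) hcγ (fun p => hle p.1 p.2)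
    have h2 : ∫ p, (G p.1 + H p.2) ∂γ'
        = ∫ p : (ℝ × ℝ) × (ℝ × ℝ), G p.1 ∂γ' + ∫ p : (ℝ × ℝ) × (ℝ × ℝ), H p.2 ∂γ' :=
      integral_add hGfst hHsnd
    have h3 : ∫ p : (ℝ × ℝ) × (ℝ × ℝ), G p.1 ∂γ' = ∫ x, G x ∂μ := by
      rw [← hγ'.1, integral_map measurable_fst.aemeasurable hG.aestronglyMeasurable]
    have h4 : ∫ p : (ℝ × ℝ) × (ℝ × ℝ), H p.2 ∂γ' = ∫ x, H (T x) ∂μ := by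
      rw [← integral_map (μ := γ') measurable_snd.aemeasurable hH.aestronglyMeasurable,
        hγ'.2, hbind, integral_map hT.measurable.aemeasurable hH.aestronglyMeasurable]
    have h5 : ∫ x, G x ∂μ + ∫ x, H (T x) ∂μ = ∫ x, (G x + H (T x)) ∂μ :=
      (integral_add hGint hHTint).symm
    have h6 : ∫ x, (G x + H (T x)) ∂μ = ∫ x, c (x, T x) ∂μ :=
      integral_congr_ae (Filter.Eventually.of_forall fun x => (heq x).symm)
    linarith
  calc transportCost c (μ ⊗ₘ K)
      = ENNReal.ofReal (∫ x, c (x, T x) ∂μ) := by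
        rw [hcost, ← ofReal_integral_eq_lintegral_ofReal hf
          (Filter.Eventually.of_forall fun x => hc0 _)]
    _ ≤ ENNReal.ofReal (∫ p, c p ∂γ') := ENNReal.ofReal_le_ofReal key
    _ = transportCost c γ' := by
        rw [transportCost, ofReal_integral_eq_lintegral_ofReal hcγ
          (Filter.Eventually.of_forall fun pt => hc0 _)]

end Aux

set_option maxHeartbeats 1600000 in
/-- Connectivity of signed measures by optimal transport kernels is
not transitive in dimension two: for the squared Euclidean cost on `ℝ²` and
`a₁ = δ_{(1,0.5)} − δ_{(−1,−0.5)}`, `a₂ = δ_{(−1,0.5)} − δ_{(1,−0.5)}`,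
`a₃ = δ_{(0,1)} − δ_{(0,−1)}`, there are optimal transport kernels sending `a₁` to `a₃`
and `a₃` to `a₂`, but none sending `a₁` to `a₂`. -/
theorem stmt14
    (c : (ℝ × ℝ) × (ℝ × ℝ) → ℝ)
    (hc : ∀ pt : (ℝ × ℝ) × (ℝ × ℝ),
      c pt = (pt.1.1 - pt.2.1) ^ 2 + (pt.1.2 - pt.2.2) ^ 2)
    (a₁ a₂ a₃ : SignedMeasure (ℝ × ℝ))
    (ha₁ : a₁ = (Measure.dirac ((1 : ℝ), (1 / 2 : ℝ))).toSignedMeasure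
        - (Measure.dirac ((-1 : ℝ), (-(1 / 2) : ℝ))).toSignedMeasure)
    (ha₂ : a₂ = (Measure.dirac ((-1 : ℝ), (1 / 2 : ℝ))).toSignedMeasure
        - (Measure.dirac ((1 : ℝ), (-(1 / 2) : ℝ))).toSignedMeasure)
    (ha₃ : a₃ = (Measure.dirac ((0 : ℝ), (1 : ℝ))).toSignedMeasure
        - (Measure.dirac ((0 : ℝ), (-1 : ℝ))).toSignedMeasure) :
    (∃ K : Kernel (ℝ × ℝ) (ℝ × ℝ), ∃ _ : IsMarkovKernel K,
        IsOptimalTransportKernel c K ∧ signedKernelImage a₁ K = a₃) ∧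
    (∃ K : Kernel (ℝ × ℝ) (ℝ × ℝ), ∃ _ : IsMarkovKernel K,
        IsOptimalTransportKernel c K ∧ signedKernelImage a₃ K = a₂) ∧
    ¬ (∃ K : Kernel (ℝ × ℝ) (ℝ × ℝ), ∃ _ : IsMarkovKernel K,
        IsOptimalTransportKernel c K ∧ signedKernelImage a₁ K = a₂) := by
  have hcm : Measurable c := by
    have hcf : c = fun pt : (ℝ × ℝ) × (ℝ × ℝ) =>
        (pt.1.1 - pt.2.1) ^ 2 + (pt.1.2 - pt.2.2) ^ 2 := funext hc
    rw [hcf]; fun_prop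
  have h12 : ((1 : ℝ), (1 / 2 : ℝ)) ≠ ((-1 : ℝ), (-(1 / 2) : ℝ)) := by
    simp [Prod.ext_iff]; norm_num
  have h33 : ((0 : ℝ), (1 : ℝ)) ≠ ((0 : ℝ), (-1 : ℝ)) := by
    simp [Prod.ext_iff]; norm_num
  refine ⟨?_, ?_, ?_⟩
  · -- a₁ → a₃ via the linear map with matrix [[1,-2],[-2,6]]
    have hT : Continuous (fun x : ℝ × ℝ => (x.1 - 2 * x.2, -2 * x.1 + 6 * x.2)) := by fun_prop
    refine ⟨Kernel.deterministic _ hT.measurable, inferInstance, ?_, ?_⟩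
    · refine isOptimalTransportKernel_deterministic c hc _ hT
        (fun x => 4 * x.1 * x.2 - 5 * x.2 ^ 2)
        (fun y => -2 * y.1 ^ 2 - 2 * y.1 * y.2 + y.2 ^ 2 / 2)
        (by fun_prop) (by fun_prop) ?_ ?_ 100 ?_ ?_
      · intro x y
        rw [hc]
        nlinarith [sq_nonneg (x.1 - 2 * x.2 - y.1), sq_nonneg (x.2 - y.1 - y.2 / 2)]
      · intro x
        rw [hc]; dsimp only; ring
      · intro x
        rw [hc]; dsimp only; rw [abs_le]
        constructor
        · nlinarith [sq_nonneg (400 * x.1 - 998 * x.2), sq_nonneg x.1, sq_nonneg x.2]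
        · nlinarith [sq_nonneg (400 * x.1 - 1002 * x.2), sq_nonneg x.1, sq_nonneg x.2]
      · intro x
        rw [hc]; dsimp only; rw [abs_le]
        constructor
        · nlinarith [sq_nonneg (404 * x.1 - 1012 * x.2), sq_nonneg x.1, sq_nonneg x.2]
        · nlinarith [sq_nonneg (396 * x.1 - 988 * x.2), sq_nonneg x.1, sq_nonneg x.2]
    · rw [ha₁, ha₃, signedKernelImage_dirac_sub h12]
      have hp : Kernel.deterministic (fun x : ℝ × ℝ => (x.1 - 2 * x.2, -2 * x.1 + 6 * x.2))
          hT.measurable ((1 : ℝ), (1 / 2 : ℝ)) = Measure.dirac ((0 : ℝ), (1 : ℝ)) := by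
        rw [Kernel.deterministic_apply]
        congr 1
        norm_num [Prod.ext_iff]
      have hq : Kernel.deterministic (fun x : ℝ × ℝ => (x.1 - 2 * x.2, -2 * x.1 + 6 * x.2))
          hT.measurable ((-1 : ℝ), (-(1 / 2) : ℝ)) = Measure.dirac ((0 : ℝ), (-1 : ℝ)) := by
        rw [Kernel.deterministic_apply]
        congr 1
        norm_num [Prod.ext_iff]
      exact congrArg₂ (· - ·) (toSM_congr hp) (toSM_congr hq)
  · -- a₃ → a₂ via the linear map with matrix [[3,-1],[-1,1/2]]
    have hT : Continuous (fun x : ℝ × ℝ => (3 * x.1 - x.2, -x.1 + x.2 / 2)) := by fun_prop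
    refine ⟨Kernel.deterministic _ hT.measurable, inferInstance, ?_, ?_⟩
    · refine isOptimalTransportKernel_deterministic c hc _ hT
        (fun x => -2 * x.1 ^ 2 + 2 * x.1 * x.2 + x.2 ^ 2 / 2)
        (fun y => -4 * y.1 * y.2 - 5 * y.2 ^ 2)
        (by fun_prop) (by fun_prop) ?_ ?_ 100 ?_ ?_
      · intro x y
        rw [hc]
        nlinarith [sq_nonneg (x.1 - y.1 - 2 * y.2), sq_nonneg (-2 * x.1 + x.2 - 2 * y.2)]
      · intro x
        rw [hc]; dsimp only; ring
      · intro x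
        rw [hc]; dsimp only; rw [abs_le]
        constructor
        · nlinarith [sq_nonneg (498 * x.1 - 149 * x.2), sq_nonneg x.1, sq_nonneg x.2]
        · nlinarith [sq_nonneg (502 * x.1 - 151 * x.2), sq_nonneg x.1, sq_nonneg x.2]
      · intro x
        rw [hc]; dsimp only; rw [abs_le]
        constructor
        · nlinarith [sq_nonneg (1014 * x.1 - 245 * x.2), sq_nonneg x.1, sq_nonneg x.2]
        · nlinarith [sq_nonneg (986 * x.1 - 295 * x.2), sq_nonneg x.1, sq_nonneg x.2]
    · rw [ha₃, ha₂, signedKernelImage_dirac_sub h33]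
      have hp : Kernel.deterministic (fun x : ℝ × ℝ => (3 * x.1 - x.2, -x.1 + x.2 / 2))
          hT.measurable ((0 : ℝ), (1 : ℝ)) = Measure.dirac ((-1 : ℝ), (1 / 2 : ℝ)) := by
        rw [Kernel.deterministic_apply]
        congr 1
        norm_num [Prod.ext_iff]
      have hq : Kernel.deterministic (fun x : ℝ × ℝ => (3 * x.1 - x.2, -x.1 + x.2 / 2))
          hT.measurable ((0 : ℝ), (-1 : ℝ)) = Measure.dirac ((1 : ℝ), (-(1 / 2) : ℝ)) := by
        rw [Kernel.deterministic_apply]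
        congr 1
        norm_num [Prod.ext_iff]
      exact congrArg₂ (· - ·) (toSM_congr hp) (toSM_congr hq)
  · -- no optimal kernel sends a₁ to a₂
    rintro ⟨K, hM, hopt, him⟩
    haveI := hM
    rw [ha₁, ha₂, signedKernelImage_dirac_sub h12] at him
    set p : ℝ × ℝ := ((1 : ℝ), (1 / 2 : ℝ)) with hpdef
    set q : ℝ × ℝ := ((-1 : ℝ), (-(1 / 2) : ℝ)) with hqdef
    set r : ℝ × ℝ := ((-1 : ℝ), (1 / 2 : ℝ)) with hrdef
    set s : ℝ × ℝ := ((1 : ℝ), (-(1 / 2) : ℝ)) with hsdef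
    have hrs : r ≠ s := by simp [hrdef, hsdef, Prod.ext_iff]; norm_num
    have happ : ∀ A : Set (ℝ × ℝ), MeasurableSet A →
        (K p A).toReal - (K q A).toReal
          = (Measure.dirac r A).toReal - (Measure.dirac s A).toReal := by
      intro A hA
      have h := congrArg (fun m : SignedMeasure (ℝ × ℝ) => m A) him
      simp only [VectorMeasure.sub_apply] at h
      rw [Measure.toSignedMeasure_apply_measurable hA,
        Measure.toSignedMeasure_apply_measurable hA,
        Measure.toSignedMeasure_apply_measurable hA,
        Measure.toSignedMeasure_apply_measurable hA] at h
      exact h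
    have hle1 : ∀ x : ℝ × ℝ, ∀ A : Set (ℝ × ℝ), (K x A).toReal ≤ 1 := by
      intro x A
      have h1 : K x A ≤ 1 := prob_le_one
      have h2 := ENNReal.toReal_mono (by simp) h1
      simpa using h2
    have hzero : ∀ x : ℝ × ℝ, ∀ A : Set (ℝ × ℝ), (K x A).toReal = 0 → K x A = 0 := by
      intro x A h
      rcases (ENNReal.toReal_eq_zero_iff _).mp h with h' | h'
      · exact h'
      · exact absurd h' (measure_ne_top _ _)
    have hKp : K p = Measure.dirac r := by
      refine prob_eq_dirac _ r ?_
      have h := happ {r}ᶜ (measurableSet_singleton r).compl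
      rw [Measure.dirac_apply, Measure.dirac_apply] at h
      rw [Set.indicator_of_notMem (by simp), Set.indicator_of_mem (by simp [hrs.symm])] at h
      simp only [ENNReal.toReal_zero, ENNReal.toReal_one, Pi.one_apply] at h
      apply hzero
      have h1 := hle1 q {r}ᶜ
      have h0 : (0:ℝ) ≤ (K p {r}ᶜ).toReal := ENNReal.toReal_nonneg
      linarith
    have hKq : K q = Measure.dirac s := by
      refine prob_eq_dirac _ s ?_
      have h := happ {s}ᶜ (measurableSet_singleton s).compl
      rw [Measure.dirac_apply, Measure.dirac_apply] at h
      rw [Set.indicator_of_mem (by simp [hrs]), Set.indicator_of_notMem (by simp)] at h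
      simp only [ENNReal.toReal_zero, ENNReal.toReal_one, Pi.one_apply] at h
      apply hzero
      have h1 := hle1 p {s}ᶜ
      have h0 : (0:ℝ) ≤ (K q {s}ᶜ).toReal := ENNReal.toReal_nonneg
      linarith
    -- a two-point test measure exhibiting non-monotonicity
    set μ : Measure (ℝ × ℝ) := Measure.dirac p + Measure.dirac q with hμdef
    have hcost : transportCost c (μ ⊗ₘ K)
        = ENNReal.ofReal (c (p, r)) + ENNReal.ofReal (c (q, s)) := by
      rw [transportCost,
        Measure.lintegral_compProd (f := fun pt => ENNReal.ofReal (c pt)) hcm.ennreal_ofReal,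
        hμdef, lintegral_add_measure, lintegral_dirac, lintegral_dirac, hKp, hKq,
        lintegral_dirac, lintegral_dirac]
    have hcpr : c (p, r) = 4 := by rw [hc]; simp [hpdef, hrdef]; norm_num
    have hcqs : c (q, s) = 4 := by rw [hc]; simp [hqdef, hsdef]; norm_num
    have hcps : c (p, s) = 1 := by rw [hc]; simp [hpdef, hsdef]; norm_num
    have hcqr : c (q, r) = 1 := by rw [hc]; simp [hqdef, hrdef]; norm_num
    have hfin : transportCost c (μ ⊗ₘ K) < ⊤ := by
      rw [hcost]
      exact ENNReal.add_lt_top.mpr ⟨ENNReal.ofReal_lt_top, ENNReal.ofReal_lt_top⟩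
    obtain ⟨-, hineq⟩ := hopt μ inferInstance hfin
    set γ' : Measure ((ℝ × ℝ) × (ℝ × ℝ)) := Measure.dirac (p, s) + Measure.dirac (q, r)
      with hγdef
    have hbind : μ.bind ⇑K = Measure.dirac r + Measure.dirac s := by
      ext A hA
      rw [Measure.bind_apply hA (Kernel.measurable K).aemeasurable, hμdef, lintegral_add_measure,
        lintegral_dirac, lintegral_dirac, hKp, hKq, Measure.add_apply]
    have hcoup : IsCoupling γ' μ (μ.bind ⇑K) := by
      constructor
      · rw [hγdef, Measure.map_add _ _ measurable_fst, Measure.map_dirac' measurable_fst,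
          Measure.map_dirac' measurable_fst]
      · rw [hγdef, Measure.map_add _ _ measurable_snd, Measure.map_dirac' measurable_snd,
          Measure.map_dirac' measurable_snd, hbind]
        exact add_comm _ _
    have hle2 := hineq γ' hcoup
    have hγcost : transportCost c γ'
        = ENNReal.ofReal (c (p, s)) + ENNReal.ofReal (c (q, r)) := by
      rw [transportCost, hγdef, lintegral_add_measure, lintegral_dirac, lintegral_dirac]
    rw [hcost, hγcost, hcpr, hcqs, hcps, hcqr,
      ← ENNReal.ofReal_add (by norm_num) (by norm_num),
      ← ENNReal.ofReal_add (by norm_num) (by norm_num),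
      ENNReal.ofReal_le_ofReal_iff (by norm_num)] at hle2
    norm_num at hle2
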